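/- Let (B_i)_{i≥1} be i.i.d. square-integrable positive-integer-valued random variables and (D_n)_{n≥1} i.i.d. geometrically distributed random variables with parameter q ∈ (0,1) on {1,2,3,...}, with the two sequences independent of each other. Partition the index set {1,2,3,...} into consecutive blocks, block i having length B_i, and for the ℓ-th symbol of block i define its tarry time as the sum of the D_n's with indices strictly after that symbol's index and within block i. Then, almost surely, the limit of (total tarry time of the first m blocks) / (Σ_{i=1}^{m} B_i) as m → ∞ exists and equals (E[B₁²] − E[B₁]) / (2q E[B₁]). -/

import Mathlib

open MeasureTheory ProbabilityTheory Finset Filter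
open scoped ENNReal NNReal
set_option linter.unusedSectionVars false
set_option maxHeartbeats 1000000

/-- block functional: total tarry as function of block length and D-values -/
def v2fG (b : ℕ) (v : ℕ → ℕ) : ℕ := ∑ ℓ ∈ Finset.Icc 1 b, ∑ n ∈ Finset.Icc (ℓ + 1) b, v n

lemma v2fG_congr (b : ℕ) (v w : ℕ → ℕ) (h : ∀ n, 1 ≤ n → n ≤ b → v n = w n) :
    v2fG b v = v2fG b w := by
  refine Finset.sum_congr rfl fun ℓ hℓ => Finset.sum_congr rfl fun n hn => ?_
  simp only [Finset.mem_Icc] at hℓ hn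
  exact h n (by omega) hn.2

lemma v2fG_eq_sum (b : ℕ) (v : ℕ → ℕ) :
    v2fG b v = ∑ n ∈ Finset.Icc 1 b, (n - 1) * v n := by
  rw [v2fG, Finset.sum_comm' (t' := Finset.Icc 1 b) (s' := fun n => Finset.Icc 1 (n-1))]
  · refine Finset.sum_congr rfl fun n hn => ?_
    simp only [Finset.mem_Icc] at hn
    rw [Finset.sum_const, Nat.card_Icc, smul_eq_mul]
    congr 1
  · intro ℓ n
    simp only [Finset.mem_Icc]
    omega

def v2fc (b : ℕ) : ℕ := ∑ n ∈ Finset.Icc 1 b, (n - 1)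

lemma v2fc_cast (b : ℕ) : (v2fc b : ℝ) = ((b : ℝ) ^ 2 - b) / 2 := by
  induction b with
  | zero => simp [v2fc]
  | succ b ih =>
    have : v2fc (b + 1) = v2fc b + b := by
      rw [v2fc, v2fc, Finset.sum_Icc_succ_top (by omega)]
      simp
    rw [this]
    push_cast
    rw [ih]
    ring


noncomputable def v2fgm (q : ℝ) (k : ℕ) : ℝ≥0∞ :=
  if k = 0 then 0 else ENNReal.ofReal (q * (1 - q) ^ (k - 1))

lemma v2f_sumgeom {q : ℝ} (hq : q ∈ Set.Ioo (0:ℝ) 1) (a : ℝ) (ha : 0 ≤ a) :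
    ∑' j : ℕ, ENNReal.ofReal (a * (1 - q) ^ j) = ENNReal.ofReal (a / q) := by
  obtain ⟨hq0, hq1⟩ := hq
  have hr0 : (0:ℝ) ≤ 1 - q := by linarith
  have hr1 : 1 - q < 1 := by linarith
  have hsum : Summable (fun j : ℕ => a * (1 - q) ^ j) :=
    (summable_geometric_of_lt_one hr0 hr1).mul_left a
  rw [← ENNReal.ofReal_tsum_of_nonneg (fun j => by positivity) hsum]
  congr 1
  rw [tsum_mul_left, tsum_geometric_of_lt_one hr0 hr1]
  field_simp
  rw [sub_sub_cancel, mul_div_assoc, div_self (ne_of_gt hq0), mul_one]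

def v2fext {b : ℕ} (v : Fin b → ℕ) : ℕ → ℕ :=
  fun n => if h : n - 1 < b then v ⟨n - 1, h⟩ else 0

noncomputable def v2fp (q : ℝ) (b t : ℕ) : ℝ≥0∞ :=
  ∑' v : Fin b → ℕ, if v2fG b (v2fext v) = t then ∏ j : Fin b, v2fgm q (v j) else 0


section
variable {Ω : Type*} [MeasurableSpace Ω] {μ : Measure Ω} [IsProbabilityMeasure μ]
  {q : ℝ} {D : ℕ → Ω → ℕ}

lemma v2f_geom_tail (hq : q ∈ Set.Ioo (0:ℝ) 1) (hDmeas : ∀ n, Measurable (D n))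
    (hgeom : ∀ n, 1 ≤ n → ∀ k, 1 ≤ k →
      μ {ω | D n ω = k} = ENNReal.ofReal (q * (1 - q) ^ (k - 1)))
    {n : ℕ} (hn : 1 ≤ n) (k : ℕ) :
    μ {ω | k < D n ω} = ENNReal.ofReal ((1 - q) ^ k) := by
  have hpart : {ω | k < D n ω} = ⋃ j : ℕ, {ω | D n ω = k + 1 + j} := by
    ext ω
    simp only [Set.mem_setOf_eq, Set.mem_iUnion]
    constructor
    · intro h; exact ⟨D n ω - (k+1), by omega⟩
    · rintro ⟨j, hj⟩; omega
  have hdisj : Pairwise (Function.onFun Disjoint fun j : ℕ => {ω | D n ω = k + 1 + j}) := by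
    intro a b hab
    simp only [Function.onFun, Set.disjoint_left, Set.mem_setOf_eq]
    intro ω h1 h2
    omega
  rw [hpart, measure_iUnion hdisj (fun j => (hDmeas n) (measurableSet_singleton _))]
  have : ∀ j : ℕ, μ {ω | D n ω = k + 1 + j} =
      ENNReal.ofReal ((q * (1-q)^k) * (1-q) ^ j) := by
    intro j
    rw [hgeom n hn (k+1+j) (by omega)]
    congr 1
    rw [show k + 1 + j - 1 = k + j by omega, pow_add]
    ring
  rw [tsum_congr this,
    v2f_sumgeom hq _ (mul_nonneg hq.1.le (pow_nonneg (by linarith [hq.2]) k))]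
  congr 1
  rw [mul_comm, mul_div_assoc, div_self (ne_of_gt hq.1), mul_one]

lemma v2f_geom_pmf (hq : q ∈ Set.Ioo (0:ℝ) 1) (hDmeas : ∀ n, Measurable (D n))
    (hgeom : ∀ n, 1 ≤ n → ∀ k, 1 ≤ k →
      μ {ω | D n ω = k} = ENNReal.ofReal (q * (1 - q) ^ (k - 1)))
    {n : ℕ} (hn : 1 ≤ n) (k : ℕ) : μ {ω | D n ω = k} = v2fgm q k := by
  rcases Nat.eq_zero_or_pos k with rfl | hk
  · have htail := v2f_geom_tail hq hDmeas hgeom hn 0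
    simp only [pow_zero, ENNReal.ofReal_one] at htail
    have hcompl : {ω | D n ω = 0} = {ω | 0 < D n ω}ᶜ := by
      ext ω
      simp only [Set.mem_setOf_eq, Set.mem_compl_iff, not_lt, Nat.lt_one_iff, Nat.le_zero]
    have hms : MeasurableSet {ω | 0 < D n ω} := hDmeas n measurableSet_Ioi
    rw [v2fgm, if_pos rfl, hcompl, measure_compl hms (measure_ne_top μ _), htail,
      measure_univ, tsub_self]
  · rw [hgeom n hn k hk, v2fgm, if_neg (by omega)]

lemma v2f_lintegral_nat {g : Ω → ℕ} (hg : Measurable g) :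
    ∫⁻ ω, (g ω : ℝ≥0∞) ∂μ = ∑' k : ℕ, μ {ω | k < g ω} := by
  have hset : ∀ k : ℕ, MeasurableSet {ω | k < g ω} := fun k => hg measurableSet_Ioi
  have hpt : ∀ ω, (g ω : ℝ≥0∞) =
      ∑' k : ℕ, Set.indicator {ω' | k < g ω'} (1 : Ω → ℝ≥0∞) ω := by
    intro ω
    have h0 : ∀ k ∉ Finset.range (g ω),
        Set.indicator {ω' | k < g ω'} (1 : Ω → ℝ≥0∞) ω = 0 := by
      intro k hk
      simp only [Finset.mem_range, not_lt] at hk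
      simp [Set.indicator_apply, Set.mem_setOf_eq, Nat.not_lt.mpr hk]
    have h1 : ∀ k ∈ Finset.range (g ω),
        Set.indicator {ω' | k < g ω'} (1 : Ω → ℝ≥0∞) ω = 1 := fun k hk => by
      simp [Set.indicator_apply, Set.mem_setOf_eq, Finset.mem_range.mp hk]
    rw [tsum_eq_sum h0, Finset.sum_congr rfl h1, Finset.sum_const, Finset.card_range,
      nsmul_eq_mul, mul_one]
  calc ∫⁻ ω, (g ω : ℝ≥0∞) ∂μ
      = ∫⁻ ω, ∑' k : ℕ, Set.indicator {ω' | k < g ω'} (1 : Ω → ℝ≥0∞) ω ∂μ :=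
        lintegral_congr hpt
    _ = ∑' k : ℕ, ∫⁻ ω, Set.indicator {ω' | k < g ω'} (1 : Ω → ℝ≥0∞) ω ∂μ :=
        lintegral_tsum fun k => (measurable_one.indicator (hset k)).aemeasurable
    _ = ∑' k : ℕ, μ {ω | k < g ω} :=
        tsum_congr fun k => lintegral_indicator_one (hset k)

lemma v2f_geom_mean (hq : q ∈ Set.Ioo (0:ℝ) 1) (hDmeas : ∀ n, Measurable (D n))
    (hgeom : ∀ n, 1 ≤ n → ∀ k, 1 ≤ k →
      μ {ω | D n ω = k} = ENNReal.ofReal (q * (1 - q) ^ (k - 1)))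
    {n : ℕ} (hn : 1 ≤ n) :
    ∫⁻ ω, (D n ω : ℝ≥0∞) ∂μ = ENNReal.ofReal (1 / q) := by
  rw [v2f_lintegral_nat (hDmeas n)]
  have : ∀ k : ℕ, μ {ω | k < D n ω} = ENNReal.ofReal (1 * (1-q) ^ k) := fun k => by
    rw [v2f_geom_tail hq hDmeas hgeom hn k, one_mul]
  rw [tsum_congr this, v2f_sumgeom hq 1 zero_le_one]



lemma v2f_atom (hq : q ∈ Set.Ioo (0:ℝ) 1) (hDmeas : ∀ n, Measurable (D n))
    (hDindep : iIndepFun D μ)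
    (hgeom : ∀ n, 1 ≤ n → ∀ k, 1 ≤ k →
      μ {ω | D n ω = k} = ENNReal.ofReal (q * (1 - q) ^ (k - 1)))
    (ν b : ℕ) (v : Fin b → ℕ) :
    μ (⋂ j : Fin b, {ω | D (ν + 1 + (j : ℕ)) ω = v j}) = ∏ j : Fin b, v2fgm q (v j) := by
  classical
  set e : Fin b → ℕ := fun j => ν + 1 + (j : ℕ) with he
  have einj : Function.Injective e := by
    intro a c h
    simp only [he] at h
    exact Fin.ext (by omega)
  set S : Finset ℕ := Finset.image e Finset.univ with hS
  set sets : ℕ → Set ℕ := fun n =>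
    if h : ∃ j : Fin b, e j = n then {v h.choose} else Set.univ with hsets
  have hsets_e : ∀ j : Fin b, sets (e j) = {v j} := by
    intro j
    have h : ∃ j' : Fin b, e j' = e j := ⟨j, rfl⟩
    rw [hsets]
    dsimp only
    rw [dif_pos h]
    exact congrArg (fun x => ({x} : Set ℕ)) (congrArg v (einj h.choose_spec))
  have hmeas_sets : ∀ n, n ∈ S → MeasurableSet (sets n) := fun n _ =>
    (Set.to_countable _).measurableSet
  have key := hDindep.measure_inter_preimage_eq_mul S hmeas_sets
  have hset_eq : (⋂ n ∈ S, D n ⁻¹' sets n) = ⋂ j : Fin b, {ω | D (ν + 1 + (j : ℕ)) ω = v j} := by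
    ext ω
    simp only [Set.mem_iInter, hS, Finset.mem_image, Finset.mem_univ, true_and,
      Set.mem_preimage, Set.mem_setOf_eq]
    constructor
    · intro h j
      have h2 := h (e j) ⟨j, rfl⟩
      rw [hsets_e j] at h2
      exact h2
    · rintro h n ⟨j, rfl⟩
      rw [hsets_e j]
      exact h j
  rw [hset_eq] at key
  rw [key, hS, Finset.prod_image (fun a _ c _ h => einj h)]
  refine Finset.prod_congr rfl fun j _ => ?_
  rw [show D (e j) ⁻¹' sets (e j) = {ω | D (e j) ω = v j} by rw [hsets_e j]; rfl]
  exact v2f_geom_pmf hq hDmeas hgeom (show 1 ≤ ν + 1 + (j : ℕ) by omega) (v j)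

lemma v2f_dev_preimage (b ν t : ℕ) :
    {ω | v2fG b (fun n => D (ν + n) ω) = t}
      = (fun ω (j : Fin b) => D (ν + 1 + (j : ℕ)) ω) ⁻¹' {v | v2fG b (v2fext v) = t} := by
  ext ω
  simp only [Set.mem_setOf_eq, Set.mem_preimage]
  have hcg : v2fG b (fun n => D (ν + n) ω)
      = v2fG b (v2fext (fun j : Fin b => D (ν + 1 + (j : ℕ)) ω)) := by
    apply v2fG_congr
    intro n h1 h2
    simp only [v2fext]
    rw [dif_pos (by omega : n - 1 < b)]
    show D (ν + n) ω = D (ν + 1 + (n - 1)) ω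
    congr 1
    omega
  rw [hcg]

lemma v2f_dev (hq : q ∈ Set.Ioo (0:ℝ) 1) (hDmeas : ∀ n, Measurable (D n))
    (hDindep : iIndepFun D μ)
    (hgeom : ∀ n, 1 ≤ n → ∀ k, 1 ≤ k →
      μ {ω | D n ω = k} = ENNReal.ofReal (q * (1 - q) ^ (k - 1)))
    (ν b t : ℕ) :
    μ {ω | v2fG b (fun n => D (ν + n) ω) = t} = v2fp q b t := by
  classical
  have hAmeas : ∀ v : Fin b → ℕ,
      MeasurableSet (⋂ j : Fin b, {ω | D (ν + 1 + (j : ℕ)) ω = v j}) :=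
    fun v => MeasurableSet.iInter fun j => (hDmeas _) (measurableSet_singleton _)
  have hpart : {ω | v2fG b (fun n => D (ν + n) ω) = t}
      = ⋃ v : Fin b → ℕ, (if v2fG b (v2fext v) = t then
          (⋂ j : Fin b, {ω | D (ν + 1 + (j : ℕ)) ω = v j}) else ∅) := by
    rw [v2f_dev_preimage b ν t]
    ext ω
    simp only [Set.mem_preimage, Set.mem_setOf_eq, Set.mem_iUnion]
    constructor
    · intro h
      refine ⟨fun j => D (ν + 1 + (j : ℕ)) ω, ?_⟩
      rw [if_pos h]
      exact Set.mem_iInter.2 fun j => rfl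
    · rintro ⟨v, hv⟩
      by_cases hc : v2fG b (v2fext v) = t
      · rw [if_pos hc] at hv
        simp only [Set.mem_iInter, Set.mem_setOf_eq] at hv
        have : (fun j : Fin b => D (ν + 1 + (j : ℕ)) ω) = v := funext hv
        rw [this]
        exact hc
      · rw [if_neg hc] at hv
        exact absurd hv (Set.notMem_empty ω)
  have hdisj : Pairwise (Function.onFun Disjoint fun v : Fin b → ℕ =>
      (if v2fG b (v2fext v) = t then
        (⋂ j : Fin b, {ω | D (ν + 1 + (j : ℕ)) ω = v j}) else ∅)) := by
    intro v w hvw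
    simp only [Function.onFun]
    split_ifs with h1 h2
    · rw [Set.disjoint_left]
      intro ω hω1 hω2
      simp only [Set.mem_iInter, Set.mem_setOf_eq] at hω1 hω2
      exact hvw (funext fun j => (hω1 j).symm.trans (hω2 j))
    all_goals simp
  rw [hpart, measure_iUnion hdisj (fun v => by
    split_ifs
    · exact hAmeas v
    · exact MeasurableSet.empty)]
  rw [v2fp]
  refine tsum_congr fun v => ?_
  split_ifs with h
  · exact v2f_atom hq hDmeas hDindep hgeom ν b v
  · exact measure_empty

lemma v2f_dev_joint (hq : q ∈ Set.Ioo (0:ℝ) 1) (hDmeas : ∀ n, Measurable (D n))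
    (hDindep : iIndepFun D μ)
    (hgeom : ∀ n, 1 ≤ n → ∀ k, 1 ≤ k →
      μ {ω | D n ω = k} = ENNReal.ofReal (q * (1 - q) ^ (k - 1)))
    {ν b ν' b' : ℕ} (t s : ℕ) (h : ν + b ≤ ν') :
    μ ({ω | v2fG b (fun n => D (ν + n) ω) = t} ∩
        {ω | v2fG b' (fun n => D (ν' + n) ω) = s})
      = v2fp q b t * v2fp q b' s := by
  classical
  set S : Finset ℕ := Finset.Ioc ν (ν + b) with hS
  set T : Finset ℕ := Finset.Ioc ν' (ν' + b') with hT
  have hST : Disjoint S T := by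
    rw [Finset.disjoint_left]
    intro a haS haT
    simp only [hS, hT, Finset.mem_Ioc] at haS haT
    omega
  have hindep := hDindep.indepFun_finset S T hST hDmeas
  set r : (↥S → ℕ) → (Fin b → ℕ) := fun u j =>
    u ⟨ν + 1 + (j : ℕ), by simp only [hS, Finset.mem_Ioc]; omega⟩ with hr
  set r' : (↥T → ℕ) → (Fin b' → ℕ) := fun u j =>
    u ⟨ν' + 1 + (j : ℕ), by simp only [hT, Finset.mem_Ioc]; omega⟩ with hr'
  have hcomp := hindep.comp (measurable_of_countable r) (measurable_of_countable r')
  have he1 : (r ∘ fun a (i : ↥S) => D (i : ℕ) a) = fun ω (j : Fin b) => D (ν + 1 + (j : ℕ)) ω :=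
    rfl
  have he2 : (r' ∘ fun a (i : ↥T) => D (i : ℕ) a)
      = fun ω (j : Fin b') => D (ν' + 1 + (j : ℕ)) ω := rfl
  rw [he1, he2] at hcomp
  have key := hcomp.measure_inter_preimage_eq_mul
    (s := {v | v2fG b (v2fext v) = t}) (t := {v | v2fG b' (v2fext v) = s})
    (Set.to_countable _).measurableSet (Set.to_countable _).measurableSet
  rw [v2f_dev_preimage b ν t, v2f_dev_preimage b' ν' s, key,
    ← v2f_dev_preimage b ν t, ← v2f_dev_preimage b' ν' s,
    v2f_dev hq hDmeas hDindep hgeom ν b t, v2f_dev hq hDmeas hDindep hgeom ν' b' s]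

end


def v2fN {Ω : Type*} (B : ℕ → Ω → ℕ) (i : ℕ) (ω : Ω) : ℕ := ∑ j ∈ Finset.range i, B j ω

def v2fT {Ω : Type*} (B D : ℕ → Ω → ℕ) (i : ℕ) (ω : Ω) : ℕ :=
  v2fG (B i ω) (fun n => D (v2fN B i ω + n) ω)

section
variable {Ω : Type*} [MeasurableSpace Ω] {μ : Measure Ω} [IsProbabilityMeasure μ]
  {q : ℝ} {B D : ℕ → Ω → ℕ}

lemma v2fN_measurable (hBmeas : ∀ i, Measurable (B i)) (i : ℕ) :
    Measurable (v2fN B i) :=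
  Finset.measurable_sum _ (fun j _ => hBmeas j)

lemma v2f_dev_measurable (hDmeas : ∀ n, Measurable (D n)) (ν b t : ℕ) :
    MeasurableSet {ω | v2fG b (fun n => D (ν + n) ω) = t} := by
  have : Measurable (fun ω => v2fG b (fun n => D (ν + n) ω)) :=
    Finset.measurable_sum _ (fun ℓ _ => Finset.measurable_sum _ (fun n _ => hDmeas (ν + n)))
  exact this (measurableSet_singleton t)

lemma v2fT_part (i t : ℕ) :
    {ω | v2fT B D i ω = t} = ⋃ c : ℕ × ℕ,
      ({ω | v2fN B i ω = c.1} ∩ {ω | B i ω = c.2}) ∩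
        {ω | v2fG c.2 (fun n => D (c.1 + n) ω) = t} := by
  ext ω
  simp only [Set.mem_setOf_eq, Set.mem_iUnion, Set.mem_inter_iff]
  constructor
  · intro h
    exact ⟨(v2fN B i ω, B i ω), ⟨rfl, rfl⟩, h⟩
  · rintro ⟨c, ⟨h1, h2⟩, h3⟩
    rw [v2fT, h1, h2]
    exact h3

lemma v2fT_measurable (hBmeas : ∀ i, Measurable (B i)) (hDmeas : ∀ n, Measurable (D n))
    (i : ℕ) : Measurable (v2fT B D i) := by
  apply measurable_to_countable'
  intro t
  show MeasurableSet {ω | v2fT B D i ω = t}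
  rw [v2fT_part]
  exact MeasurableSet.iUnion fun c =>
    (((v2fN_measurable hBmeas i) (measurableSet_singleton c.1)).inter
      ((hBmeas i) (measurableSet_singleton c.2))).inter
      (v2f_dev_measurable hDmeas c.1 c.2 t)

lemma v2f_collapse {X : Ω → ℕ} (hX : Measurable X) {E : Set Ω} (hE : MeasurableSet E)
    {α : Type*} [Countable α] (F : α → Set Ω) (hF : ∀ a, MeasurableSet (F a))
    (w : α → ℝ≥0∞) :
    ∑' c : ℕ × α, μ (E ∩ ({ω | X ω = c.1} ∩ F c.2)) * w c.2
      = ∑' a : α, μ (E ∩ F a) * w a := by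
  rw [ENNReal.tsum_prod', ENNReal.tsum_comm]
  refine tsum_congr fun a => ?_
  dsimp only
  rw [ENNReal.tsum_mul_right]
  congr 1
  have hu : (⋃ ν : ℕ, E ∩ ({ω | X ω = ν} ∩ F a)) = E ∩ F a := by
    ext ω
    simp only [Set.mem_iUnion, Set.mem_inter_iff, Set.mem_setOf_eq]
    constructor
    · rintro ⟨ν, h1, _, h3⟩; exact ⟨h1, h3⟩
    · rintro ⟨h1, h3⟩; exact ⟨X ω, h1, rfl, h3⟩
  rw [← hu, measure_iUnion]
  · intro a' b' hab
    simp only [Function.onFun, Set.disjoint_left, Set.mem_inter_iff, Set.mem_setOf_eq]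
    rintro ω ⟨_, h2, _⟩ ⟨_, h5, _⟩
    exact hab (h2 ▸ h5 ▸ rfl)
  · exact fun ν => hE.inter ((hX (measurableSet_singleton ν)).inter (hF a))

lemma v2f_key1 (hq : q ∈ Set.Ioo (0:ℝ) 1)
    (hBmeas : ∀ i, Measurable (B i)) (hDmeas : ∀ n, Measurable (D n))
    (hDindep : iIndepFun D μ)
    (hgeom : ∀ n, 1 ≤ n → ∀ k, 1 ≤ k →
      μ {ω | D n ω = k} = ENNReal.ofReal (q * (1 - q) ^ (k - 1)))
    (hBD : IndepFun (fun ω i => B i ω) (fun ω n => D n ω) μ)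
    (i t : ℕ) :
    μ {ω | v2fT B D i ω = t} = ∑' b : ℕ, μ {ω | B i ω = b} * v2fp q b t := by
  have hterm : ∀ c : ℕ × ℕ,
      μ (({ω | v2fN B i ω = c.1} ∩ {ω | B i ω = c.2}) ∩
          {ω | v2fG c.2 (fun n => D (c.1 + n) ω) = t})
        = μ ({ω | v2fN B i ω = c.1} ∩ {ω | B i ω = c.2}) * v2fp q c.2 t := by
    rintro ⟨ν, b⟩
    have hA : ({ω | v2fN B i ω = ν} ∩ {ω | B i ω = b})
        = (fun ω k => B k ω) ⁻¹' {v : ℕ → ℕ | (∑ j ∈ Finset.range i, v j, v i) = (ν, b)} := by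
      ext ω
      simp only [Set.mem_inter_iff, Set.mem_setOf_eq, Set.mem_preimage, Prod.mk.injEq]
      rfl
    have hC : {ω | v2fG b (fun n => D (ν + n) ω) = t}
        = (fun ω k => D k ω) ⁻¹' {v : ℕ → ℕ | v2fG b (fun n => v (ν + n)) = t} := rfl
    have hAmeas : MeasurableSet {v : ℕ → ℕ | (∑ j ∈ Finset.range i, v j, v i) = (ν, b)} :=
      ((Finset.measurable_sum _ (fun j _ => measurable_pi_apply j)).prodMk
        (measurable_pi_apply i)) (measurableSet_singleton (ν, b))
    have hCmeas : MeasurableSet {v : ℕ → ℕ | v2fG b (fun n => v (ν + n)) = t} :=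
      (Finset.measurable_sum _ (fun ℓ _ => Finset.measurable_sum _
        (fun n _ => measurable_pi_apply (ν + n)))) (measurableSet_singleton t)
    rw [hA, hC, hBD.measure_inter_preimage_eq_mul _ _ hAmeas hCmeas, ← hA, ← hC,
      v2f_dev hq hDmeas hDindep hgeom ν b t]
  have hdisj : Pairwise (Function.onFun Disjoint fun c : ℕ × ℕ =>
      ({ω | v2fN B i ω = c.1} ∩ {ω | B i ω = c.2}) ∩
        {ω | v2fG c.2 (fun n => D (c.1 + n) ω) = t}) := by
    intro c c' hcc
    simp only [Function.onFun, Set.disjoint_left, Set.mem_inter_iff, Set.mem_setOf_eq]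
    rintro ω ⟨⟨h1, h2⟩, _⟩ ⟨⟨h3, h4⟩, _⟩
    exact hcc (Prod.ext (h1 ▸ h3 ▸ rfl) (h2 ▸ h4 ▸ rfl))
  have hmeas : ∀ c : ℕ × ℕ, MeasurableSet
      (({ω | v2fN B i ω = c.1} ∩ {ω | B i ω = c.2}) ∩
        {ω | v2fG c.2 (fun n => D (c.1 + n) ω) = t}) := fun c =>
    (((v2fN_measurable hBmeas i) (measurableSet_singleton c.1)).inter
      ((hBmeas i) (measurableSet_singleton c.2))).inter
      (v2f_dev_measurable hDmeas c.1 c.2 t)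
  rw [v2fT_part, measure_iUnion hdisj hmeas, tsum_congr hterm]
  have := v2f_collapse (μ := μ) (v2fN_measurable hBmeas i) MeasurableSet.univ
    (fun b : ℕ => {ω | B i ω = b}) (fun b => (hBmeas i) (measurableSet_singleton b))
    (fun b => v2fp q b t)
  simp only [Set.univ_inter] at this
  exact this

lemma v2f_key2 (hq : q ∈ Set.Ioo (0:ℝ) 1)
    (hBmeas : ∀ i, Measurable (B i)) (hDmeas : ∀ n, Measurable (D n))
    (hBindep : iIndepFun B μ)
    (hDindep : iIndepFun D μ)
    (hBD : IndepFun (fun ω i => B i ω) (fun ω n => D n ω) μ)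
    (hgeom : ∀ n, 1 ≤ n → ∀ k, 1 ≤ k →
      μ {ω | D n ω = k} = ENNReal.ofReal (q * (1 - q) ^ (k - 1)))
    {i j : ℕ} (hij : i < j) (t s : ℕ) :
    μ ({ω | v2fT B D i ω = t} ∩ {ω | v2fT B D j ω = s})
      = (∑' b : ℕ, μ {ω | B i ω = b} * v2fp q b t)
        * (∑' b : ℕ, μ {ω | B j ω = b} * v2fp q b s) := by
  -- the partition over c = (ν, b, ν', b')
  set U : ℕ × ℕ × ℕ × ℕ → Set Ω := fun c =>
    ({ω | v2fN B i ω = c.1} ∩ ({ω | B i ω = c.2.1} ∩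
      ({ω | v2fN B j ω = c.2.2.1} ∩ {ω | B j ω = c.2.2.2})))
      ∩ ({ω | v2fG c.2.1 (fun n => D (c.1 + n) ω) = t} ∩
         {ω | v2fG c.2.2.2 (fun n => D (c.2.2.1 + n) ω) = s}) with hU
  have hpart : {ω | v2fT B D i ω = t} ∩ {ω | v2fT B D j ω = s} = ⋃ c, U c := by
    ext ω
    simp only [hU, Set.mem_inter_iff, Set.mem_setOf_eq, Set.mem_iUnion]
    constructor
    · rintro ⟨h1, h2⟩
      exact ⟨(v2fN B i ω, B i ω, v2fN B j ω, B j ω), ⟨rfl, rfl, rfl, rfl⟩, h1, h2⟩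
    · rintro ⟨c, ⟨e1, e2, e3, e4⟩, h1, h2⟩
      constructor
      · rw [v2fT, e1, e2]; exact h1
      · rw [v2fT, e3, e4]; exact h2
  have hdisj : Pairwise (Function.onFun Disjoint U) := by
    intro c c' hcc
    simp only [Function.onFun, hU, Set.disjoint_left, Set.mem_inter_iff, Set.mem_setOf_eq]
    rintro ω ⟨⟨a1, a2, a3, a4⟩, -⟩ ⟨⟨b1, b2, b3, b4⟩, -⟩
    refine hcc ?_
    refine Prod.ext (a1 ▸ b1 ▸ rfl) (Prod.ext (a2 ▸ b2 ▸ rfl)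
      (Prod.ext (a3 ▸ b3 ▸ rfl) (a4 ▸ b4 ▸ rfl)))
  have hmeasU : ∀ c, MeasurableSet (U c) := by
    intro c
    refine (((v2fN_measurable hBmeas i) (measurableSet_singleton _)).inter
      (((hBmeas i) (measurableSet_singleton _)).inter
        (((v2fN_measurable hBmeas j) (measurableSet_singleton _)).inter
          ((hBmeas j) (measurableSet_singleton _))))).inter
      ((v2f_dev_measurable hDmeas _ _ _).inter (v2f_dev_measurable hDmeas _ _ _))
  -- evaluate each term
  have hterm : ∀ c : ℕ × ℕ × ℕ × ℕ,
      μ (U c) = μ ({ω | v2fN B i ω = c.1} ∩ ({ω | B i ω = c.2.1} ∩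
        ({ω | v2fN B j ω = c.2.2.1} ∩ {ω | B j ω = c.2.2.2})))
          * (v2fp q c.2.1 t * v2fp q c.2.2.2 s) := by
    rintro ⟨ν, b, ν', b'⟩
    by_cases hord : ν + b ≤ ν'
    · -- independence of B-part and D-part
      have hA : ({ω | v2fN B i ω = ν} ∩ ({ω | B i ω = b} ∩
          ({ω | v2fN B j ω = ν'} ∩ {ω | B j ω = b'})))
          = (fun ω k => B k ω) ⁻¹'
            {v : ℕ → ℕ | (∑ k ∈ Finset.range i, v k, v i, ∑ k ∈ Finset.range j, v k, v j)
              = (ν, b, ν', b')} := by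
        ext ω
        simp only [Set.mem_inter_iff, Set.mem_setOf_eq, Set.mem_preimage, Prod.mk.injEq]
        rfl
      have hC : ({ω | v2fG b (fun n => D (ν + n) ω) = t} ∩
          {ω | v2fG b' (fun n => D (ν' + n) ω) = s})
          = (fun ω k => D k ω) ⁻¹'
            ({v : ℕ → ℕ | v2fG b (fun n => v (ν + n)) = t} ∩
             {v : ℕ → ℕ | v2fG b' (fun n => v (ν' + n)) = s}) := rfl
      have hAmeas : MeasurableSet
          {v : ℕ → ℕ | (∑ k ∈ Finset.range i, v k, v i, ∑ k ∈ Finset.range j, v k, v j)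
            = (ν, b, ν', b')} :=
        ((Finset.measurable_sum _ (fun k _ => measurable_pi_apply k)).prodMk
          ((measurable_pi_apply i).prodMk
            ((Finset.measurable_sum _ (fun k _ => measurable_pi_apply k)).prodMk
              (measurable_pi_apply j)))) (measurableSet_singleton _)
      have hCmeas1 : Measurable (fun v : ℕ → ℕ => v2fG b (fun n => v (ν + n))) :=
        Finset.measurable_sum _ (fun ℓ _ => Finset.measurable_sum _
          (fun n _ => measurable_pi_apply _))
      have hCmeas2 : Measurable (fun v : ℕ → ℕ => v2fG b' (fun n => v (ν' + n))) :=
        Finset.measurable_sum _ (fun ℓ _ => Finset.measurable_sum _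
          (fun n _ => measurable_pi_apply _))
      have hCmeas : MeasurableSet
          ({v : ℕ → ℕ | v2fG b (fun n => v (ν + n)) = t} ∩
           {v : ℕ → ℕ | v2fG b' (fun n => v (ν' + n)) = s}) :=
        (hCmeas1 (measurableSet_singleton t)).inter (hCmeas2 (measurableSet_singleton s))
      rw [hU]
      dsimp only
      rw [hA, hC, hBD.measure_inter_preimage_eq_mul _ _ hAmeas hCmeas, ← hA, ← hC,
        v2f_dev_joint hq hDmeas hDindep hgeom t s hord]
    · -- the B-part is empty
      have hempty : ({ω | v2fN B i ω = ν} ∩ ({ω | B i ω = b} ∩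
          ({ω | v2fN B j ω = ν'} ∩ {ω | B j ω = b'}))) = (∅ : Set Ω) := by
        ext ω
        simp only [Set.mem_inter_iff, Set.mem_setOf_eq, Set.mem_empty_iff_false, iff_false,
          not_and]
        intro e1 e2 e3
        exfalso
        have hle : v2fN B i ω + B i ω ≤ v2fN B j ω := by
          have : v2fN B (i + 1) ω ≤ v2fN B j ω := by
            apply Finset.sum_le_sum_of_subset
            intro x hx
            simp only [Finset.mem_range] at hx ⊢
            omega
          rw [v2fN, Finset.sum_range_succ] at this
          exact this
        omega
      rw [hU]
      dsimp only
      rw [hempty, Set.empty_inter, measure_empty, zero_mul]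
  rw [hpart, measure_iUnion hdisj hmeasU, tsum_congr hterm]
  -- collapse ν
  have step1 := v2f_collapse (μ := μ) (v2fN_measurable hBmeas i) MeasurableSet.univ
    (fun a : ℕ × ℕ × ℕ => {ω | B i ω = a.1} ∩
      ({ω | v2fN B j ω = a.2.1} ∩ {ω | B j ω = a.2.2}))
    (fun a => ((hBmeas i) (measurableSet_singleton _)).inter
      (((v2fN_measurable hBmeas j) (measurableSet_singleton _)).inter
        ((hBmeas j) (measurableSet_singleton _))))
    (fun a => v2fp q a.1 t * v2fp q a.2.2 s)
  simp only [Set.univ_inter] at step1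
  rw [step1]
  -- collapse ν' : rewrite as tsum over b then (ν', b')
  rw [ENNReal.tsum_prod']
  have step2 : ∀ b : ℕ,
      (∑' a : ℕ × ℕ, μ ({ω | B i ω = b} ∩
          ({ω | v2fN B j ω = a.1} ∩ {ω | B j ω = a.2})) * (v2fp q b t * v2fp q a.2 s))
        = ∑' b' : ℕ, μ ({ω | B i ω = b} ∩ {ω | B j ω = b'}) * (v2fp q b t * v2fp q b' s) := by
    intro b
    exact v2f_collapse (μ := μ) (v2fN_measurable hBmeas j)
      ((hBmeas i) (measurableSet_singleton b))
      (fun b' : ℕ => {ω | B j ω = b'})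
      (fun b' => (hBmeas j) (measurableSet_singleton b'))
      (fun b' => v2fp q b t * v2fp q b' s)
  rw [tsum_congr step2]
  -- factor using independence of B i and B j
  have hBij : ∀ b b' : ℕ, μ ({ω | B i ω = b} ∩ {ω | B j ω = b'})
      = μ {ω | B i ω = b} * μ {ω | B j ω = b'} := by
    intro b b'
    exact (hBindep.indepFun (by omega : i ≠ j)).measure_inter_preimage_eq_mul
      {b} {b'} (measurableSet_singleton b) (measurableSet_singleton b')
  calc ∑' b : ℕ, ∑' b' : ℕ, μ ({ω | B i ω = b} ∩ {ω | B j ω = b'})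
        * (v2fp q b t * v2fp q b' s)
      = ∑' b : ℕ, ∑' b' : ℕ, (μ {ω | B i ω = b} * v2fp q b t)
          * (μ {ω | B j ω = b'} * v2fp q b' s) := by
        refine tsum_congr fun b => tsum_congr fun b' => ?_
        rw [hBij b b']
        ring
    _ = (∑' b : ℕ, μ {ω | B i ω = b} * v2fp q b t)
          * (∑' b : ℕ, μ {ω | B j ω = b} * v2fp q b s) := by
        rw [← ENNReal.tsum_mul_right]
        refine tsum_congr fun b => ?_
        rw [ENNReal.tsum_mul_left]

lemma v2fT_map_singleton (hq : q ∈ Set.Ioo (0:ℝ) 1)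
    (hBmeas : ∀ i, Measurable (B i)) (hDmeas : ∀ n, Measurable (D n))
    (hBident : ∀ i, IdentDistrib (B i) (B 0) μ μ)
    (hDindep : iIndepFun D μ)
    (hgeom : ∀ n, 1 ≤ n → ∀ k, 1 ≤ k →
      μ {ω | D n ω = k} = ENNReal.ofReal (q * (1 - q) ^ (k - 1)))
    (hBD : IndepFun (fun ω i => B i ω) (fun ω n => D n ω) μ)
    (i t : ℕ) :
    Measure.map (v2fT B D i) μ {t} = ∑' b : ℕ, μ {ω | B 0 ω = b} * v2fp q b t := by
  rw [Measure.map_apply (v2fT_measurable hBmeas hDmeas i) (measurableSet_singleton t)]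
  rw [show v2fT B D i ⁻¹' {t} = {ω | v2fT B D i ω = t} from rfl,
    v2f_key1 hq hBmeas hDmeas hDindep hgeom hBD i t]
  refine tsum_congr fun b => ?_
  congr 1
  exact (hBident i).measure_mem_eq (measurableSet_singleton b)

lemma v2fT_identDistrib (hq : q ∈ Set.Ioo (0:ℝ) 1)
    (hBmeas : ∀ i, Measurable (B i)) (hDmeas : ∀ n, Measurable (D n))
    (hBident : ∀ i, IdentDistrib (B i) (B 0) μ μ)
    (hDindep : iIndepFun D μ)
    (hgeom : ∀ n, 1 ≤ n → ∀ k, 1 ≤ k →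
      μ {ω | D n ω = k} = ENNReal.ofReal (q * (1 - q) ^ (k - 1)))
    (hBD : IndepFun (fun ω i => B i ω) (fun ω n => D n ω) μ)
    (i : ℕ) : IdentDistrib (v2fT B D i) (v2fT B D 0) μ μ :=
  ⟨(v2fT_measurable hBmeas hDmeas i).aemeasurable,
   (v2fT_measurable hBmeas hDmeas 0).aemeasurable,
   MeasureTheory.Measure.ext_of_singleton fun t => by
    rw [v2fT_map_singleton hq hBmeas hDmeas hBident hDindep hgeom hBD i t,
      v2fT_map_singleton hq hBmeas hDmeas hBident hDindep hgeom hBD 0 t]⟩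

lemma v2fT_indepFun (hq : q ∈ Set.Ioo (0:ℝ) 1)
    (hBmeas : ∀ i, Measurable (B i)) (hDmeas : ∀ n, Measurable (D n))
    (hBindep : iIndepFun B μ)
    (hDindep : iIndepFun D μ)
    (hgeom : ∀ n, 1 ≤ n → ∀ k, 1 ≤ k →
      μ {ω | D n ω = k} = ENNReal.ofReal (q * (1 - q) ^ (k - 1)))
    (hBD : IndepFun (fun ω i => B i ω) (fun ω n => D n ω) μ)
    {i j : ℕ} (hij : i < j) : IndepFun (v2fT B D i) (v2fT B D j) μ := by
  rw [indepFun_iff_map_prod_eq_prod_map_map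
    (v2fT_measurable hBmeas hDmeas i).aemeasurable
    (v2fT_measurable hBmeas hDmeas j).aemeasurable]
  refine MeasureTheory.Measure.ext_of_singleton fun c => ?_
  obtain ⟨t, s⟩ := c
  have hmapi := Measure.map_apply (μ := μ) (v2fT_measurable hBmeas hDmeas i)
    (measurableSet_singleton t)
  have hmapj := Measure.map_apply (μ := μ) (v2fT_measurable hBmeas hDmeas j)
    (measurableSet_singleton s)
  rw [Measure.map_apply ((v2fT_measurable hBmeas hDmeas i).prodMk
      (v2fT_measurable hBmeas hDmeas j)) (measurableSet_singleton (t, s)),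
    ← Set.singleton_prod_singleton, Measure.prod_prod, hmapi, hmapj]
  have hpre : (fun ω => (v2fT B D i ω, v2fT B D j ω)) ⁻¹' ({t} ×ˢ {s})
      = {ω | v2fT B D i ω = t} ∩ {ω | v2fT B D j ω = s} := by
    ext ω
    simp [Set.mem_preimage, Set.mem_prod]
  rw [hpre, v2f_key2 hq hBmeas hDmeas hBindep hDindep hBD hgeom hij t s,
    ← v2f_key1 hq hBmeas hDmeas hDindep hgeom hBD i t,
    ← v2f_key1 hq hBmeas hDmeas hDindep hgeom hBD j s]
  rfl

lemma v2fT0_eq (ω : Ω) :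
    v2fT B D 0 ω = ∑ n ∈ Finset.Icc 1 (B 0 ω), (n - 1) * D n ω := by
  rw [v2fT, v2fG_eq_sum]
  refine Finset.sum_congr rfl fun n hn => ?_
  congr 2
  simp [v2fN]

lemma v2f_indic_lintegral (hBmeas : ∀ i, Measurable (B i)) (n : ℕ) :
    ∫⁻ ω, Set.indicator {ω' | n ≤ B 0 ω'} (1 : Ω → ℝ≥0∞) ω ∂μ = μ {ω | n ≤ B 0 ω} :=
  lintegral_indicator_one ((hBmeas 0) measurableSet_Ici)

lemma v2fT0_lintegral (hq : q ∈ Set.Ioo (0:ℝ) 1)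
    (hBmeas : ∀ i, Measurable (B i)) (hDmeas : ∀ n, Measurable (D n))
    (hgeom : ∀ n, 1 ≤ n → ∀ k, 1 ≤ k →
      μ {ω | D n ω = k} = ENNReal.ofReal (q * (1 - q) ^ (k - 1)))
    (hBD : IndepFun (fun ω i => B i ω) (fun ω n => D n ω) μ) :
    ∫⁻ ω, (v2fT B D 0 ω : ℝ≥0∞) ∂μ
      = ENNReal.ofReal (1 / q) * ∫⁻ ω, (v2fc (B 0 ω) : ℝ≥0∞) ∂μ := by
  classical
  set ind : ℕ → Ω → ℝ≥0∞ :=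
    fun n => Set.indicator {ω' | n ≤ B 0 ω'} (1 : Ω → ℝ≥0∞) with hind
  have hindmeas : ∀ n, Measurable (ind n) :=
    fun n => measurable_const.indicator ((hBmeas 0) measurableSet_Ici)
  have hindval : ∀ n ω, ind n ω = if n ≤ B 0 ω then 1 else 0 := by
    intro n ω
    rw [hind]
    simp [Set.indicator_apply, Set.mem_setOf_eq]
  have hDcastmeas : ∀ n, Measurable (fun ω => (D n ω : ℝ≥0∞)) :=
    fun n => (measurable_of_countable (fun k : ℕ => (k : ℝ≥0∞))).comp (hDmeas n)
  -- pointwise expansion of T 0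
  have hpt : ∀ ω, (v2fT B D 0 ω : ℝ≥0∞)
      = ∑' n : ℕ, ((n - 1 : ℕ) : ℝ≥0∞) * ((D n ω : ℝ≥0∞) * ind n ω) := by
    intro ω
    rw [v2fT0_eq, Nat.cast_sum]
    rw [tsum_eq_sum (s := Finset.Icc 1 (B 0 ω)) (fun n hn => by
      simp only [Finset.mem_Icc, not_and_or, not_le] at hn
      rcases hn with hn | hn
      · interval_cases n
        simp
      · rw [hindval]
        rw [if_neg (by omega)]
        simp)]
    refine Finset.sum_congr rfl fun n hn => ?_
    simp only [Finset.mem_Icc] at hn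
    rw [hindval, if_pos hn.2, mul_one, Nat.cast_mul]
  -- pointwise expansion of v2fc ∘ B 0
  have hpt2 : ∀ ω, (v2fc (B 0 ω) : ℝ≥0∞)
      = ∑' n : ℕ, ((n - 1 : ℕ) : ℝ≥0∞) * ind n ω := by
    intro ω
    rw [v2fc, Nat.cast_sum]
    rw [tsum_eq_sum (s := Finset.Icc 1 (B 0 ω)) (fun n hn => by
      simp only [Finset.mem_Icc, not_and_or, not_le] at hn
      rcases hn with hn | hn
      · interval_cases n
        simp
      · rw [hindval, if_neg (by omega)]
        simp)]
    refine Finset.sum_congr rfl fun n hn => ?_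
    simp only [Finset.mem_Icc] at hn
    rw [hindval, if_pos hn.2, mul_one]
  -- independence of D n and the indicator
  have hDind : ∀ n : ℕ, IndepFun (fun ω => (D n ω : ℝ≥0∞)) (ind n) μ := by
    intro n
    have base : IndepFun (fun ω k => D k ω) (fun ω k => B k ω) μ := hBD.symm
    have hφ : Measurable (fun w : ℕ → ℕ => (w n : ℝ≥0∞)) :=
      (measurable_of_countable (fun k : ℕ => (k : ℝ≥0∞))).comp (measurable_pi_apply n)
    have hψ : Measurable (fun v : ℕ → ℕ =>
        Set.indicator {v' : ℕ → ℕ | n ≤ v' 0} (fun _ => (1 : ℝ≥0∞)) v) :=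
      measurable_const.indicator ((measurable_pi_apply 0) measurableSet_Ici)
    have := base.comp hφ hψ
    have heq : ((fun v : ℕ → ℕ =>
        Set.indicator {v' : ℕ → ℕ | n ≤ v' 0} (fun _ => (1 : ℝ≥0∞)) v) ∘ (fun ω k => B k ω))
        = ind n := by
      ext ω
      rw [hindval]
      simp [Set.indicator_apply, Set.mem_setOf_eq]
    rwa [heq] at this
  -- main computation
  calc ∫⁻ ω, (v2fT B D 0 ω : ℝ≥0∞) ∂μ
      = ∑' n : ℕ, ∫⁻ ω, ((n - 1 : ℕ) : ℝ≥0∞) * ((D n ω : ℝ≥0∞) * ind n ω) ∂μ := by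
        rw [lintegral_congr hpt]
        exact lintegral_tsum fun n =>
          (measurable_const.mul ((hDcastmeas n).mul (hindmeas n))).aemeasurable
    _ = ∑' n : ℕ, ((n - 1 : ℕ) : ℝ≥0∞) * (ENNReal.ofReal (1 / q) * μ {ω | n ≤ B 0 ω}) := by
        refine tsum_congr fun n => ?_
        rw [lintegral_const_mul _ (f := fun ω => (D n ω : ℝ≥0∞) * ind n ω) ((hDcastmeas n).mul (hindmeas n))]
        rcases Nat.eq_zero_or_pos n with rfl | hn
        · simp
        · congr 1
          rw [show (fun ω => (D n ω : ℝ≥0∞) * ind n ω)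
              = (fun ω => (D n ω : ℝ≥0∞)) * ind n from rfl] at *
          rw [lintegral_mul_eq_lintegral_mul_lintegral_of_indepFun (hDcastmeas n)
            (hindmeas n) (hDind n), v2f_geom_mean hq hDmeas hgeom hn,
            v2f_indic_lintegral hBmeas n]
    _ = ENNReal.ofReal (1 / q) * ∑' n : ℕ, ((n - 1 : ℕ) : ℝ≥0∞) * μ {ω | n ≤ B 0 ω} := by
        rw [← ENNReal.tsum_mul_left]
        refine tsum_congr fun n => ?_
        ring
    _ = ENNReal.ofReal (1 / q) * ∫⁻ ω, (v2fc (B 0 ω) : ℝ≥0∞) ∂μ := by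
        congr 1
        rw [lintegral_congr hpt2, lintegral_tsum (f := fun n ω => ((n - 1 : ℕ) : ℝ≥0∞) * ind n ω) fun n =>
          (measurable_const.mul (hindmeas n)).aemeasurable]
        refine tsum_congr fun n => ?_
        rw [lintegral_const_mul _ (hindmeas n), v2f_indic_lintegral hBmeas n]

lemma v2fc_integrable (hBsq : MemLp (fun ω => (B 0 ω : ℝ)) 2 μ) :
    Integrable (fun ω => (v2fc (B 0 ω) : ℝ)) μ := by
  have h1 : Integrable (fun ω => ((B 0 ω : ℝ)) ^ 2) μ := hBsq.integrable_sq
  have h2 : Integrable (fun ω => (B 0 ω : ℝ)) μ := hBsq.integrable one_le_two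
  exact ((h1.sub h2).div_const 2).congr
    (Filter.Eventually.of_forall fun ω => (v2fc_cast (B 0 ω)).symm)

lemma v2fc_integral (hBsq : MemLp (fun ω => (B 0 ω : ℝ)) 2 μ) :
    ∫ ω, (v2fc (B 0 ω) : ℝ) ∂μ
      = ((∫ ω, (B 0 ω : ℝ) ^ 2 ∂μ) - ∫ ω, (B 0 ω : ℝ) ∂μ) / 2 := by
  have h1 : Integrable (fun ω => ((B 0 ω : ℝ)) ^ 2) μ := hBsq.integrable_sq
  have h2 : Integrable (fun ω => (B 0 ω : ℝ)) μ := hBsq.integrable one_le_two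
  rw [← integral_sub h1 h2, ← integral_div]
  exact integral_congr_ae (Filter.Eventually.of_forall fun ω => v2fc_cast (B 0 ω))

lemma v2fc_lintegral_eq (hBsq : MemLp (fun ω => (B 0 ω : ℝ)) 2 μ) :
    ∫⁻ ω, (v2fc (B 0 ω) : ℝ≥0∞) ∂μ = ENNReal.ofReal (∫ ω, (v2fc (B 0 ω) : ℝ) ∂μ) := by
  rw [ofReal_integral_eq_lintegral_ofReal (v2fc_integrable hBsq)
    (Filter.Eventually.of_forall fun ω => Nat.cast_nonneg _)]
  exact lintegral_congr fun ω => (ENNReal.ofReal_natCast _).symm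

lemma v2fTreal_integrable (hq : q ∈ Set.Ioo (0:ℝ) 1)
    (hBmeas : ∀ i, Measurable (B i)) (hDmeas : ∀ n, Measurable (D n))
    (hBsq : MemLp (fun ω => (B 0 ω : ℝ)) 2 μ)
    (hgeom : ∀ n, 1 ≤ n → ∀ k, 1 ≤ k →
      μ {ω | D n ω = k} = ENNReal.ofReal (q * (1 - q) ^ (k - 1)))
    (hBD : IndepFun (fun ω i => B i ω) (fun ω n => D n ω) μ) :
    Integrable (fun ω => (v2fT B D 0 ω : ℝ)) μ := by
  constructor
  · exact ((measurable_of_countable (fun k : ℕ => (k : ℝ))).comp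
      (v2fT_measurable hBmeas hDmeas 0)).aestronglyMeasurable
  · rw [hasFiniteIntegral_iff_ofReal (Filter.Eventually.of_forall fun ω => Nat.cast_nonneg _)]
    rw [lintegral_congr (fun ω => (ENNReal.ofReal_natCast (v2fT B D 0 ω) : _)),
      v2fT0_lintegral hq hBmeas hDmeas hgeom hBD, v2fc_lintegral_eq hBsq]
    exact ENNReal.mul_lt_top ENNReal.ofReal_lt_top ENNReal.ofReal_lt_top

lemma v2fTreal_integral (hq : q ∈ Set.Ioo (0:ℝ) 1)
    (hBmeas : ∀ i, Measurable (B i)) (hDmeas : ∀ n, Measurable (D n))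
    (hBsq : MemLp (fun ω => (B 0 ω : ℝ)) 2 μ)
    (hgeom : ∀ n, 1 ≤ n → ∀ k, 1 ≤ k →
      μ {ω | D n ω = k} = ENNReal.ofReal (q * (1 - q) ^ (k - 1)))
    (hBD : IndepFun (fun ω i => B i ω) (fun ω n => D n ω) μ) :
    ∫ ω, (v2fT B D 0 ω : ℝ) ∂μ = (1 / q) * ∫ ω, (v2fc (B 0 ω) : ℝ) ∂μ := by
  have hEC : 0 ≤ ∫ ω, (v2fc (B 0 ω) : ℝ) ∂μ :=
    integral_nonneg fun ω => Nat.cast_nonneg _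
  rw [integral_eq_lintegral_of_nonneg_ae
    (Filter.Eventually.of_forall fun ω => Nat.cast_nonneg _)
    ((measurable_of_countable (fun k : ℕ => (k : ℝ))).comp
      (v2fT_measurable hBmeas hDmeas 0)).aestronglyMeasurable]
  rw [lintegral_congr (fun ω => (ENNReal.ofReal_natCast (v2fT B D 0 ω) : _)),
    v2fT0_lintegral hq hBmeas hDmeas hgeom hBD, v2fc_lintegral_eq hBsq,
    ← ENNReal.ofReal_mul (div_nonneg zero_le_one hq.1.le)]
  rw [ENNReal.toReal_ofReal (mul_nonneg (div_nonneg zero_le_one hq.1.le) hEC)]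

end

/-- Long-run per-symbol average tarry time. Block `i` (0-indexed, representing
block `i+1`) covers the symbols with indices `N i + 1, ..., N i + B i` where
`N i = Σ_{j<i} B j`; the tarry time of the `ℓ`-th symbol of block `i` is
`Σ_{n=ℓ+1}^{B i} D (N i + n)`. Almost surely, the ratio of the total tarry time of the
first `m` blocks to the total number of symbols `Σ_{i<m} B i` converges, as `m → ∞`, to
`(E[B₁²] − E[B₁]) / (2 q E[B₁])` (with `B 0` playing the role of `B₁`). -/
theorem v2f_tarry_time_lln
    {Ω : Type*} [MeasurableSpace Ω] {μ : Measure Ω} [IsProbabilityMeasure μ]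
    (q : ℝ) (hq : q ∈ Set.Ioo (0 : ℝ) 1)
    (B : ℕ → Ω → ℕ) (D : ℕ → Ω → ℕ)
    (hBmeas : ∀ i, Measurable (B i)) (hDmeas : ∀ n, Measurable (D n))
    (hBindep : iIndepFun B μ)
    (hBident : ∀ i, IdentDistrib (B i) (B 0) μ μ)
    (hBpos : ∀ i ω, 1 ≤ B i ω)
    (hBsq : MemLp (fun ω => (B 0 ω : ℝ)) 2 μ)
    (hDindep : iIndepFun D μ)
    (hgeom : ∀ n, 1 ≤ n → ∀ k, 1 ≤ k →
      μ {ω | D n ω = k} = ENNReal.ofReal (q * (1 - q) ^ (k - 1)))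
    (hBD : IndepFun (fun ω i => B i ω) (fun ω n => D n ω) μ) :
    ∀ᵐ ω ∂μ, Tendsto
      (fun m => (∑ i ∈ Finset.range m, ∑ ℓ ∈ Finset.Icc 1 (B i ω),
          ∑ n ∈ Finset.Icc (ℓ + 1) (B i ω),
            (D ((∑ j ∈ Finset.range i, B j ω) + n) ω : ℝ)) /
        (∑ i ∈ Finset.range m, (B i ω : ℝ)))
      atTop
      (nhds ((μ[fun ω => ((B 0 ω : ℝ)) ^ 2] - μ[fun ω => (B 0 ω : ℝ)]) /
        (2 * q * μ[fun ω => (B 0 ω : ℝ)]))) := by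

  have hcast : Measurable (fun k : ℕ => (k : ℝ)) := measurable_of_countable _
  set Treal : ℕ → Ω → ℝ := fun i ω => (v2fT B D i ω : ℝ) with hTreal
  set Breal : ℕ → Ω → ℝ := fun i ω => (B i ω : ℝ) with hBreal
  set EB1 : ℝ := μ[fun ω => (B 0 ω : ℝ)] with hEB1
  set EB2 : ℝ := μ[fun ω => ((B 0 ω : ℝ)) ^ 2] with hEB2
  -- SLLN for T
  have hTint : Integrable (Treal 0) μ :=
    v2fTreal_integrable hq hBmeas hDmeas hBsq hgeom hBD
  have hTindep : Pairwise (Function.onFun (IndepFun · · μ) Treal) := by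
    intro i j hij
    have : IndepFun (v2fT B D i) (v2fT B D j) μ := by
      rcases lt_or_gt_of_ne hij with h | h
      · exact v2fT_indepFun hq hBmeas hDmeas hBindep hDindep hgeom hBD h
      · exact (v2fT_indepFun hq hBmeas hDmeas hBindep hDindep hgeom hBD h).symm
    exact this.comp hcast hcast
  have hTident : ∀ i, IdentDistrib (Treal i) (Treal 0) μ μ := fun i =>
    (v2fT_identDistrib hq hBmeas hDmeas hBident hDindep hgeom hBD i).comp hcast
  have hT := strong_law_ae Treal hTint hTindep hTident
  -- SLLN for B
  have hBint : Integrable (Breal 0) μ := hBsq.integrable one_le_two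
  have hBindep' : Pairwise (Function.onFun (IndepFun · · μ) Breal) := fun i j hij =>
    ((hBindep.indepFun hij).comp hcast hcast)
  have hBident' : ∀ i, IdentDistrib (Breal i) (Breal 0) μ μ := fun i =>
    (hBident i).comp hcast
  have hB := strong_law_ae Breal hBint hBindep' hBident'
  -- the mean of B is at least 1
  have hEB1ge : 1 ≤ EB1 := by
    rw [hEB1]
    calc (1 : ℝ) = μ[fun _ : Ω => (1 : ℝ)] := by simp
    _ ≤ μ[fun ω => (B 0 ω : ℝ)] := by
        apply integral_mono (integrable_const 1) hBint
        intro ω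
        show (1 : ℝ) ≤ (B 0 ω : ℝ)
        exact_mod_cast hBpos 0 ω
  have hEB1pos : 0 < EB1 := lt_of_lt_of_le one_pos hEB1ge
  -- the mean of T 0
  have hET : μ[Treal 0] = (1 / q) * ((EB2 - EB1) / 2) := by
    rw [hTreal]
    show ∫ ω, (v2fT B D 0 ω : ℝ) ∂μ = _
    rw [v2fTreal_integral hq hBmeas hDmeas hBsq hgeom hBD, v2fc_integral hBsq]
  filter_upwards [hT, hB] with ω h1 h2
  rw [hET] at h1
  have hq0 : q ≠ 0 := ne_of_gt hq.1
  have hEB1ne : EB1 ≠ 0 := ne_of_gt hEB1pos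
  have hdiv := h1.div h2 hEB1ne
  have hfinal : (fun m : ℕ =>
      ((m : ℝ)⁻¹ • ∑ i ∈ Finset.range m, Treal i ω)
        / ((m : ℝ)⁻¹ • ∑ i ∈ Finset.range m, Breal i ω)) =ᶠ[atTop]
      (fun m => (∑ i ∈ Finset.range m, ∑ ℓ ∈ Finset.Icc 1 (B i ω),
          ∑ n ∈ Finset.Icc (ℓ + 1) (B i ω),
            (D ((∑ j ∈ Finset.range i, B j ω) + n) ω : ℝ)) /
        (∑ i ∈ Finset.range m, (B i ω : ℝ))) := by
    filter_upwards [eventually_ge_atTop 1] with m hm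
    have hm0 : ((m : ℝ)) ≠ 0 := Nat.cast_ne_zero.mpr (by omega)
    rw [smul_eq_mul, smul_eq_mul, mul_div_mul_left _ _ (inv_ne_zero hm0)]
    congr 1
    refine Finset.sum_congr rfl fun i _ => ?_
    rw [hTreal]
    show ((v2fT B D i ω : ℕ) : ℝ) = _
    rw [v2fT, v2fG]
    push_cast
    rfl
  have hlim := hdiv.congr' hfinal
  have hval : 1 / q * ((EB2 - EB1) / 2) / (∫ x, Breal 0 x ∂μ)
      = (EB2 - EB1) / (2 * q * EB1) := by
    have hBE : (∫ x, Breal 0 x ∂μ) = EB1 := rfl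
    rw [hBE]
    rw [div_eq_div_iff hEB1ne (mul_ne_zero (mul_ne_zero two_ne_zero hq0) hEB1ne)]
    field_simp
  rw [hval] at hlim
  exact hlim
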